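/- Consider a 2-column house allocation instance whose bipartite row-element graph is connected; if it is a tree (so the number of distinct listed houses is |A| + 1), then for every avoidable house x there exists a Pareto optimal matching whose image equals the set of all listed houses except x, and no matching can have all listed houses in its image. -/

import Mathlib

/-- A 2-column house allocation instance: every applicant has a top house and
a (distinct) second house; only these two houses of its preference list
matter. -/
structure TwoCol (A B : Type*) where
  h1 : A → B
  h2 : A → B
  distinct : ∀ a, h1 a ≠ h2 a

namespace TwoCol

variable {A B : Type*}

/-- A (partial) matching of a 2-column instance: each applicant receives
either its top house, its second house, or nothing, and no house is given to
two applicants. -/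
def IsMatching (M : TwoCol A B) (τ : A → Option B) : Prop :=
  (∀ a b, τ a = some b → b = M.h1 a ∨ b = M.h2 a) ∧
    ∀ a a' b, τ a = some b → τ a' = some b → a = a'

/-- Applicant `a` strictly prefers outcome `x` to outcome `y`
(top house ≻ second house ≻ unassigned). -/
def PrefOpt (M : TwoCol A B) (a : A) (x y : Option B) : Prop :=
  (x = some (M.h1 a) ∧ y ≠ some (M.h1 a)) ∨ (x = some (M.h2 a) ∧ y = none)

/-- `S` is a blocking coalition of `τ`. -/
def IsBlocking (M : TwoCol A B) (τ : A → Option B) (S : Set A) : Prop :=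
  S.Nonempty ∧ ∃ τ' : A → Option B, M.IsMatching τ' ∧
    (∀ a ∉ S, τ' a = τ a) ∧ ∀ a ∈ S, M.PrefOpt a (τ' a) (τ a)

/-- `τ` is a Pareto optimal matching of the 2-column instance `M`. -/
def IsPOM (M : TwoCol A B) (τ : A → Option B) : Prop :=
  M.IsMatching τ ∧ ∀ S : Set A, ¬ M.IsBlocking τ S

/-- The bipartite row-element graph of a 2-column instance: applicant `a` is
adjacent to house `b` iff `b` is one of `a`'s two listed houses. -/
def graph (M : TwoCol A B) : SimpleGraph (A ⊕ B) where
  Adj x y :=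
    (∃ a b, x = Sum.inl a ∧ y = Sum.inr b ∧ (M.h1 a = b ∨ M.h2 a = b)) ∨
    (∃ a b, y = Sum.inl a ∧ x = Sum.inr b ∧ (M.h1 a = b ∨ M.h2 a = b))
  symm := by
    constructor
    rintro x y (⟨a, b, h1, h2, h3⟩ | ⟨a, b, h1, h2, h3⟩)
    · exact Or.inr ⟨a, b, h1, h2, h3⟩
    · exact Or.inl ⟨a, b, h1, h2, h3⟩
  loopless := by constructor; rintro x (⟨a, b, rfl, h2, _⟩ | ⟨a, b, rfl, h2, _⟩) <;> simp at h2

end TwoCol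


open SimpleGraph in

/-- Parent function on a tree rooted at `r`. -/
private lemma tree_par' {V : Type*} {G : SimpleGraph V} (hG : G.IsTree) (r : V) :
    ∃ par : V → V, par r = r ∧ (∀ v, v ≠ r → G.Adj v (par v)) ∧
      ∀ v w, G.Adj v w → par v = w ∨ par w = v := by
  classical
  have hex : ∀ v, ∃ p : G.Walk v r, p.IsPath := fun v => (hG.existsUnique_path v r).exists
  choose p hp using hex
  refine ⟨fun v => (p v).getVert 1, ?_, ?_, ?_⟩
  · show (p r).getVert 1 = r
    have h0 : p r = Walk.nil := Walk.isPath_iff_eq_nil.mp (hp r)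
    rw [h0]; rfl
  · intro v hv
    show G.Adj v ((p v).getVert 1)
    have hlen : 0 < (p v).length := by
      rcases Nat.eq_zero_or_pos (p v).length with h0 | h
      · exact absurd (Walk.eq_of_length_eq_zero h0) hv
      · exact h
    have := (p v).adj_getVert_succ hlen
    rwa [Walk.getVert_zero] at this
  · intro v w hvw
    by_cases hmem : v ∈ (p w).support
    · right
      show (p w).getVert 1 = v
      have tpath : ((p w).takeUntil v hmem).IsPath := (hp w).takeUntil hmem
      have epath : (Walk.cons hvw.symm Walk.nil : G.Walk w v).IsPath := by
        refine Walk.IsPath.nil.cons ?_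
        simp [hvw.ne']
      have heq : (p w).takeUntil v hmem = Walk.cons hvw.symm Walk.nil :=
        (hG.existsUnique_path w v).unique tpath epath
      conv_lhs => rw [← (p w).take_spec hmem, heq]
      rw [Walk.cons_append]; simp [Walk.getVert_cons _ _ one_ne_zero]
    · left
      show (p v).getVert 1 = w
      have cpath : (Walk.cons hvw (p w)).IsPath := (hp w).cons hmem
      have heq : p v = Walk.cons hvw (p w) :=
        (hG.existsUnique_path v r).unique (hp v) cpath
      rw [heq]; simp [Walk.getVert_cons _ _ one_ne_zero]

private lemma twoCol_card_B {A B : Type*} [Fintype A] [Fintype B] (M : TwoCol A B)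
    (htree : M.graph.IsTree) : Fintype.card B = Fintype.card A + 1 := by
  classical
  have hedge := htree.card_edgeFinset
  rw [SimpleGraph.edgeFinset_card] at hedge
  have hcardE : Fintype.card M.graph.edgeSet = 2 * Fintype.card A := by
    let F : A ⊕ A → M.graph.edgeSet := fun u =>
      match u with
      | Sum.inl a => ⟨s(Sum.inl a, Sum.inr (M.h1 a)),
          M.graph.mem_edgeSet.mpr (Or.inl ⟨a, M.h1 a, rfl, rfl, Or.inl rfl⟩)⟩
      | Sum.inr a => ⟨s(Sum.inl a, Sum.inr (M.h2 a)),
          M.graph.mem_edgeSet.mpr (Or.inl ⟨a, M.h2 a, rfl, rfl, Or.inr rfl⟩)⟩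
    have hbij : Function.Bijective F := by
      constructor
      · rintro (a | a) (a' | a') h <;>
          · have h' := congrArg Subtype.val h
            simp only [F, Sym2.eq_iff] at h'
            rcases h' with ⟨h1, h2⟩ | ⟨h1, h2⟩ <;> simp_all [M.distinct a', (M.distinct a').symm]
      · rintro ⟨e, he⟩
        induction e using Sym2.ind with
        | _ u v =>
          rw [SimpleGraph.mem_edgeSet] at he
          rcases he with ⟨a, b, rfl, rfl, hb | hb⟩ | ⟨a, b, rfl, rfl, hb | hb⟩
          · exact ⟨Sum.inl a, Subtype.ext (by simp only [F]; rw [hb])⟩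
          · exact ⟨Sum.inr a, Subtype.ext (by simp only [F]; rw [hb])⟩
          · exact ⟨Sum.inl a, Subtype.ext (by simp only [F]; rw [hb]; exact Sym2.eq_swap)⟩
          · exact ⟨Sum.inr a, Subtype.ext (by simp only [F]; rw [hb]; exact Sym2.eq_swap)⟩
    have := Fintype.card_of_bijective hbij
    simpa [two_mul] using this.symm
  have hV : Fintype.card (A ⊕ B) = Fintype.card A + Fintype.card B := Fintype.card_sum
  omega

/-- in a 2-column instance whose bipartite row-element graph is
a tree (connected and acyclic), for every avoidable house `x` there is a POM
whose image is all listed houses except `x`, and no matching selects every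
house. (We take `B` to consist exactly of the listed houses.) -/
theorem stmt17 {A B : Type*} [Fintype A] [Fintype B] (M : TwoCol A B)
    (hlisted : ∀ b : B, ∃ a, M.h1 a = b ∨ M.h2 a = b)
    (htree : M.graph.IsTree) :
    (∀ x : B, (∃ τ : A → Option B, M.IsPOM τ ∧ ∀ a, τ a ≠ some x) →
      ∃ τ : A → Option B, M.IsPOM τ ∧ (∀ a, τ a ≠ some x) ∧
        ∀ b : B, b ≠ x → ∃ a, τ a = some b) ∧
    ∀ τ : A → Option B, M.IsMatching τ → ¬ ∀ b : B, ∃ a, τ a = some b := by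
  classical
  have hB : Fintype.card B = Fintype.card A + 1 := twoCol_card_B M htree
  constructor
  · rintro x ⟨τ0, hτ0, hτ0x⟩
    -- Step 1: no applicant's top house is x
    have Hx : ∀ a, M.h1 a ≠ x := by
      intro a hax
      refine hτ0.2 {a} ⟨⟨a, rfl⟩, fun a' => if a' = a then some x else τ0 a', ⟨?_, ?_⟩, ?_, ?_⟩
      · intro a' b hb
        beta_reduce at hb
        by_cases h : a' = a
        · rw [if_pos h] at hb
          subst h
          exact Or.inl (by rw [← Option.some.inj hb, hax])
        · rw [if_neg h] at hb
          exact hτ0.1.1 a' b hb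
      · intro a1 a2 b hb1 hb2
        beta_reduce at hb1 hb2
        by_cases e1 : a1 = a <;> by_cases e2 : a2 = a
        · rw [e1, e2]
        · rw [if_pos e1] at hb1; rw [if_neg e2] at hb2
          exact absurd hb2 (by rw [← Option.some.inj hb1]; exact hτ0x a2)
        · rw [if_neg e1] at hb1; rw [if_pos e2] at hb2
          exact absurd hb1 (by rw [← Option.some.inj hb2]; exact hτ0x a1)
        · rw [if_neg e1] at hb1; rw [if_neg e2] at hb2
          exact hτ0.1.2 a1 a2 b hb1 hb2
      · intro a' ha'
        beta_reduce
        rw [if_neg (by simpa using ha')]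
      · intro a' ha'
        have haa : a' = a := ha'
        subst haa
        beta_reduce
        rw [if_pos rfl]
        exact Or.inl ⟨by rw [hax], by rw [hax]; exact hτ0x a'⟩
    -- Step 2: a full matching avoiding x, via the tree rooted at x
    obtain ⟨par, hparr, hadj, hdi⟩ := tree_par' htree (Sum.inr x)
    set f0 : A → B := fun a => if par (Sum.inl a) = Sum.inr (M.h1 a) then M.h2 a else M.h1 a
      with hf0
    have hcases : ∀ a, (par (Sum.inl a) = Sum.inr (M.h1 a) ∧ f0 a = M.h2 a) ∨
        (par (Sum.inl a) ≠ Sum.inr (M.h1 a) ∧ f0 a = M.h1 a) := by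
      intro a
      by_cases h : par (Sum.inl a) = Sum.inr (M.h1 a)
      · exact Or.inl ⟨h, by rw [hf0]; simp [h]⟩
      · exact Or.inr ⟨h, by rw [hf0]; simp [h]⟩
    have hval0 : ∀ a, f0 a = M.h1 a ∨ f0 a = M.h2 a := by
      intro a
      rcases hcases a with ⟨_, hv⟩ | ⟨_, hv⟩
      exacts [Or.inr hv, Or.inl hv]
    have hadjf : ∀ a, M.graph.Adj (Sum.inl a) (Sum.inr (f0 a)) := by
      intro a
      exact Or.inl ⟨a, f0 a, rfl, rfl, by
        rcases hval0 a with h | h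
        exacts [Or.inl h.symm, Or.inr h.symm]⟩
    have hnepar : ∀ a, Sum.inr (f0 a) ≠ par (Sum.inl a) := by
      intro a
      rcases hcases a with ⟨hp, hv⟩ | ⟨hp, hv⟩
      · rw [hv, hp]
        intro hc
        exact M.distinct a (Sum.inr.inj hc).symm
      · rw [hv]
        exact fun hc => hp hc.symm
    have hparf : ∀ a, par (Sum.inr (f0 a)) = Sum.inl a := by
      intro a
      rcases hdi _ _ (hadjf a) with h | h
      · exact absurd h.symm (hnepar a)
      · exact h
    have hf0x : ∀ a, f0 a ≠ x := by
      intro a hc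
      have h1 := hparf a
      rw [hc, hparr] at h1
      simp at h1
    have hf0inj : Function.Injective f0 := by
      intro a a' h
      have h1 := hparf a
      rw [h, hparf a'] at h1
      exact (Sum.inl.inj h1).symm
    -- Step 3: maximize the number of applicants getting their top house
    set s : Finset (A → B) := Finset.univ.filter (fun g =>
      (∀ a, g a = M.h1 a ∨ g a = M.h2 a) ∧ Function.Injective g ∧ ∀ a, g a ≠ x) with hs
    have hf0s : f0 ∈ s := by
      rw [hs, Finset.mem_filter]
      exact ⟨Finset.mem_univ _, hval0, hf0inj, hf0x⟩
    obtain ⟨g, hgs, hgmax⟩ := Finset.exists_max_image s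
      (fun g => (Finset.univ.filter (fun a => g a = M.h1 a)).card) ⟨f0, hf0s⟩
    rw [hs, Finset.mem_filter] at hgs
    obtain ⟨-, hgval, hginj, hgx⟩ := hgs
    refine ⟨fun a => some (g a), ⟨⟨?_, ?_⟩, ?_⟩, ?_, ?_⟩
    · intro a b hb
      rw [← Option.some.inj hb]
      exact hgval a
    · intro a a' b h1 h2
      exact hginj ((Option.some.inj h1).trans (Option.some.inj h2).symm)
    · -- no blocking coalition
      intro S hS
      obtain ⟨hSne, τ', hτ'm, hout, himp⟩ := hS
      have key : ∀ a ∈ S, τ' a = some (M.h1 a) ∧ g a ≠ M.h1 a := by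
        intro a ha
        rcases himp a ha with ⟨hx1, hx2⟩ | ⟨hx1, hx2⟩
        · exact ⟨hx1, fun hc => hx2 (congrArg some hc)⟩
        · exact absurd hx2 (by simp)
      set g2 : A → B := fun a => if a ∈ S then M.h1 a else g a with hg2
      have hτ'g2 : ∀ a, τ' a = some (g2 a) := by
        intro a
        by_cases ha : a ∈ S
        · rw [(key a ha).1, hg2]; simp [ha]
        · rw [hout a ha, hg2]; simp [ha]
      have hg2s : g2 ∈ s := by
        rw [hs, Finset.mem_filter]
        refine ⟨Finset.mem_univ _, ?_, ?_, ?_⟩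
        · intro a
          by_cases ha : a ∈ S
          · exact Or.inl (by rw [hg2]; simp [ha])
          · rcases hgval a with h | h
            · exact Or.inl (by rw [hg2]; simp [ha, h])
            · exact Or.inr (by rw [hg2]; simp [ha, h])
        · intro a a' h
          apply hτ'm.2 a a' (g2 a) (hτ'g2 a)
          rw [hτ'g2 a', h]
        · intro a
          by_cases ha : a ∈ S
          · rw [hg2]; simp only [ha, if_true]; exact Hx a
          · rw [hg2]; simp only [ha, if_false]; exact hgx a
      have hlt : (Finset.univ.filter (fun a => g a = M.h1 a)).card <
          (Finset.univ.filter (fun a => g2 a = M.h1 a)).card := by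
        apply Finset.card_lt_card
        rw [Finset.ssubset_def]
        constructor
        · intro a ha
          rw [Finset.mem_filter] at ha ⊢
          refine ⟨Finset.mem_univ _, ?_⟩
          have ha' := ha.2
          have haS : a ∉ S := fun hc => (key a hc).2 ha'
          rw [hg2]; simp [haS, ha']
        · intro hcon
          obtain ⟨a0, ha0⟩ := hSne
          have h1 : a0 ∈ Finset.univ.filter (fun a => g2 a = M.h1 a) := by
            rw [Finset.mem_filter]
            exact ⟨Finset.mem_univ _, by rw [hg2]; simp [ha0]⟩
          have h2 := hcon h1
          rw [Finset.mem_filter] at h2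
          exact (key a0 ha0).2 h2.2
      exact absurd (hgmax g2 hg2s) (not_le.mpr hlt)
    · intro a hc
      exact hgx a (Option.some.inj hc)
    · -- coverage of all houses except x
      intro b hbx
      have himg : Finset.univ.image g ⊆ Finset.univ.erase x := by
        intro b' hb'
        rw [Finset.mem_image] at hb'
        obtain ⟨a, -, rfl⟩ := hb'
        exact Finset.mem_erase.mpr ⟨hgx a, Finset.mem_univ _⟩
      have hcard1 : (Finset.univ.image g).card = Fintype.card A := by
        rw [Finset.card_image_of_injective _ hginj, Finset.card_univ]
      have hcard2 : (Finset.univ.erase x).card = Fintype.card A := by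
        rw [Finset.card_erase_of_mem (Finset.mem_univ x), Finset.card_univ, hB]
        omega
      have heq : Finset.univ.image g = Finset.univ.erase x :=
        Finset.eq_of_subset_of_card_le himg (by rw [hcard1, hcard2])
      have hbmem : b ∈ Finset.univ.image g := by
        rw [heq]
        exact Finset.mem_erase.mpr ⟨hbx, Finset.mem_univ _⟩
      obtain ⟨a, -, ha⟩ := Finset.mem_image.mp hbmem
      exact ⟨a, congrArg some ha⟩
  · intro τ hτ hall
    choose gg hgg using hall
    have hinj : Function.Injective gg := by
      intro b b' h
      have h1 := hgg b
      rw [h, hgg b'] at h1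
      exact (Option.some.inj h1).symm
    have := Fintype.card_le_of_injective gg hinj
    omega
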